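/- The generating function for the number d(n) of partitions of n into distinct parts satisfies Σ_{n≥0} d(n) qⁿ = Σ_{n≥0} q^{n(n+1)/2} / (q;q)_n as formal power series, where (q;q)_n = ∏_{j=0}^{n-1}(1 - q^{j+1}). -/

import Mathlib

open PowerSeries

namespace GFDhelper

noncomputable section

variable {α : Type*}

open Finset

open scoped Classical

/-- A convenience constructor for the power series whose coefficients indicate a subset. -/
def indicatorSeries (α : Type*) [Semiring α] (s : Set ℕ) : PowerSeries α :=
  PowerSeries.mk fun n => if n ∈ s then 1 else 0

theorem coeff_indicator (s : Set ℕ) [Semiring α] (n : ℕ) :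
    coeff (R := α) n (indicatorSeries _ s) = if n ∈ s then 1 else 0 :=
  coeff_mk _ _

theorem coeff_indicator_pos (s : Set ℕ) [Semiring α] (n : ℕ) (h : n ∈ s) :
    coeff (R := α) n (indicatorSeries _ s) = 1 := by rw [coeff_indicator, if_pos h]

theorem coeff_indicator_neg (s : Set ℕ) [Semiring α] (n : ℕ) (h : n ∉ s) :
    coeff (R := α) n (indicatorSeries _ s) = 0 := by rw [coeff_indicator, if_neg h]

theorem constantCoeff_indicator (s : Set ℕ) [Semiring α] :
    constantCoeff (R := α) (indicatorSeries _ s) = if 0 ∈ s then 1 else 0 :=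
  rfl

theorem num_series' [Field α] (i : ℕ) :
    (1 - (X : PowerSeries α) ^ (i + 1))⁻¹ = indicatorSeries α {k | i + 1 ∣ k} := by
  rw [PowerSeries.inv_eq_iff_mul_eq_one]
  · ext n
    cases n with
    | zero => simp [mul_sub, zero_pow, constantCoeff_indicator]
    | succ n =>
      simp only [coeff_one, if_false, mul_sub, mul_one, coeff_indicator,
        LinearMap.map_sub, reduceCtorEq]
      simp_rw [coeff_mul, coeff_X_pow, coeff_indicator, @boole_mul _ _ _ _]
      erw [@sum_ite _ _ _ _ _ (fun _ => Classical.propDecidable _), sum_ite]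
      simp_rw [@filter_filter _ _ _ _ _, sum_const_zero, add_zero, sum_const, nsmul_eq_mul, mul_one,
        sub_eq_iff_eq_add, zero_add]
      symm
      split_ifs with h
      · suffices #{a ∈ antidiagonal (n + 1) | i + 1 ∣ a.fst ∧ a.snd = i + 1} = 1 by
          simp only [Set.mem_setOf_eq]; convert congr_arg ((↑) : ℕ → α) this; norm_cast
        rw [card_eq_one]
        cases' h with p hp
        refine ⟨((i + 1) * (p - 1), i + 1), ?_⟩
        ext ⟨a₁, a₂⟩
        simp only [mem_filter, Prod.mk.injEq, HasAntidiagonal.mem_antidiagonal, mem_singleton]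
        constructor
        · rintro ⟨a_left, ⟨a, rfl⟩, rfl⟩
          refine ⟨?_, rfl⟩
          rw [Nat.mul_sub_left_distrib, ← hp, ← a_left, mul_one, Nat.add_sub_cancel]
        · rintro ⟨rfl, rfl⟩
          match p with
          | 0 => rw [mul_zero] at hp; cases hp
          | p + 1 => rw [hp]; simp [mul_add]
      · suffices #{a ∈ antidiagonal (n + 1) | i + 1 ∣ a.fst ∧ a.snd = i + 1} = 0 by
          simp only [Set.mem_setOf_eq]; convert congr_arg ((↑) : ℕ → α) this; norm_cast
        rw [card_eq_zero]
        apply eq_empty_of_forall_notMem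
        simp only [Prod.forall, mem_filter, not_and, HasAntidiagonal.mem_antidiagonal]
        rintro _ h₁ h₂ ⟨a, rfl⟩ rfl
        apply h
        simp [← h₂]
  · simp [zero_pow]

-- The main workhorse (from the Archive proof of Euler's partition theorem).
theorem partialGF_prop (α : Type*) [CommSemiring α] (n : ℕ) (s : Finset ℕ) (hs : ∀ i ∈ s, 0 < i)
    (c : ℕ → Set ℕ) (hc : ∀ i, i ∉ s → 0 ∈ c i) :
    #{p : n.Partition | (∀ j, p.parts.count j ∈ c j) ∧ ∀ j ∈ p.parts, j ∈ s} =
      coeff (R := α) n (∏ i ∈ s, indicatorSeries α ((· * i) '' c i)) := by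
  simp_rw [coeff_prod, coeff_indicator, prod_boole, sum_boole]
  apply congr_arg
  simp only [mem_univ, forall_true_left, not_and, not_forall, exists_prop,
    Set.mem_image, not_exists]
  set φ : (a : Nat.Partition n) →
    a ∈ filter (fun p ↦ (∀ (j : ℕ), Multiset.count j p.parts ∈ c j) ∧ ∀ j ∈ p.parts, j ∈ s) univ →
    ℕ →₀ ℕ := fun p _ => {
      toFun := fun i => Multiset.count i p.parts • i
      support := Finset.filter (fun i => i ≠ 0) p.parts.toFinset
      mem_support_toFun := fun a => by
        simp only [smul_eq_mul, ne_eq, mul_eq_zero, Multiset.count_eq_zero]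
        rw [not_or, not_not]
        simp only [Multiset.mem_toFinset, not_not, mem_filter] }
  refine Finset.card_bij φ ?_ ?_ ?_
  · intro a ha
    simp only [φ, not_forall, not_exists, not_and, exists_prop, mem_filter]
    rw [mem_finsuppAntidiag]
    dsimp only [ne_eq, smul_eq_mul, id_eq, eq_mpr_eq_cast, le_eq_subset, Finsupp.coe_mk]
    simp only [mem_univ, forall_true_left, not_and, not_forall, exists_prop,
      mem_filter, true_and] at ha
    refine ⟨⟨?_, fun i ↦ ?_⟩, fun i _ ↦ ⟨a.parts.count i, ha.1 i, rfl⟩⟩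
    · conv_rhs => simp [← a.parts_sum]
      rw [sum_multiset_count_of_subset _ s]
      · simp only [smul_eq_mul]
      · intro i
        simp only [Multiset.mem_toFinset, not_not, mem_filter]
        apply ha.2
    · simp only [ne_eq, Multiset.mem_toFinset, not_not, mem_filter, and_imp]
      exact fun hi _ ↦ ha.2 i hi
  · intro p₁ hp₁ p₂ hp₂ h
    apply Nat.Partition.ext
    simp only [true_and, mem_univ, mem_filter] at hp₁ hp₂
    ext i
    simp only [φ, ne_eq, Multiset.mem_toFinset, not_not, smul_eq_mul, Finsupp.mk.injEq] at h
    by_cases hi : i = 0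
    · rw [hi]
      rw [Multiset.count_eq_zero_of_notMem]
      · rw [Multiset.count_eq_zero_of_notMem]
        intro a; exact Nat.lt_irrefl 0 (hs 0 (hp₂.2 0 a))
      intro a; exact Nat.lt_irrefl 0 (hs 0 (hp₁.2 0 a))
    · rw [← mul_left_inj' hi]
      rw [funext_iff] at h
      exact h.2 i
  · simp only [φ, mem_filter, mem_finsuppAntidiag, mem_univ, exists_prop, true_and, and_assoc]
    rintro f ⟨hf, hf₃, hf₄⟩
    have hf' : f ∈ finsuppAntidiag s n := mem_finsuppAntidiag.mpr ⟨hf, hf₃⟩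
    simp only [mem_finsuppAntidiag] at hf'
    refine ⟨⟨∑ i ∈ s, Multiset.replicate (f i / i) i, ?_, ?_⟩, ?_, ?_, ?_⟩
    · intro i hi
      simp only [exists_prop, Multiset.mem_sum, mem_map, Function.Embedding.coeFn_mk] at hi
      rcases hi with ⟨t, ht, z⟩
      apply hs
      rwa [Multiset.eq_of_mem_replicate z]
    · simp_rw [Multiset.sum_sum, Multiset.sum_replicate, Nat.nsmul_eq_mul]
      rw [← hf'.1]
      refine sum_congr rfl fun i hi => Nat.div_mul_cancel ?_
      rcases hf₄ i hi with ⟨w, _, hw₂⟩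
      rw [← hw₂]
      exact dvd_mul_left _ _
    · intro i
      simp_rw [Multiset.count_sum', Multiset.count_replicate, sum_ite_eq']
      split_ifs with h
      · rcases hf₄ i h with ⟨w, hw₁, hw₂⟩
        rwa [← hw₂, Nat.mul_div_cancel _ (hs i h)]
      · exact hc _ h
    · intro i hi
      rw [Multiset.mem_sum] at hi
      rcases hi with ⟨j, hj₁, hj₂⟩
      rwa [Multiset.eq_of_mem_replicate hj₂]
    · ext i
      simp_rw [Multiset.count_sum', Multiset.count_replicate, sum_ite_eq']
      simp only [ne_eq, Multiset.mem_toFinset, not_not, smul_eq_mul, ite_mul,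
        zero_mul, Finsupp.coe_mk]
      split_ifs with h
      · apply Nat.div_mul_cancel
        rcases hf₄ i h with ⟨w, _, hw₂⟩
        apply Dvd.intro_left _ hw₂
      · apply symm
        rw [← Finsupp.notMem_support_iff]
        exact notMem_mono hf'.2 h

/-! ### Counting functions on partitions -/

lemma countP_le_countP (m : Multiset ℕ) {p q : ℕ → Prop} [DecidablePred p] [DecidablePred q]
    (h : ∀ x, p x → q x) : m.countP p ≤ m.countP q := by
  induction m using Multiset.induction with
  | empty => simp
  | cons a s ih =>
    simp only [Multiset.countP_cons]
    by_cases hp : p a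
    · simp [hp, h a hp]; omega
    · split_ifs <;> omega

/-- `cnt p i` is the number of parts of `p` that are at least `i`. -/
def cnt {k : ℕ} (p : Nat.Partition k) (i : ℕ) : ℕ :=
  Multiset.countP (fun x => i ≤ x) p.parts

lemma countP_succ (m : Multiset ℕ) (j : ℕ) :
    m.countP (fun x => j ≤ x) = m.countP (fun x => j + 1 ≤ x) + m.count j := by
  induction m using Multiset.induction with
  | empty => simp
  | cons a s ih =>
    simp only [Multiset.countP_cons, Multiset.count_cons, ih]
    split_ifs <;> omega

lemma cnt_succ {k : ℕ} (p : Nat.Partition k) (j : ℕ) :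
    cnt p j = cnt p (j + 1) + p.parts.count j :=
  countP_succ _ _

lemma cnt_anti {k : ℕ} (p : Nat.Partition k) {i j : ℕ} (h : i ≤ j) : cnt p j ≤ cnt p i :=
  countP_le_countP _ (fun x hx => le_trans h hx)

lemma parts_le {k : ℕ} (p : Nat.Partition k) {x : ℕ} (hx : x ∈ p.parts) : x ≤ k := by
  simpa [p.parts_sum] using Multiset.single_le_sum (fun _ _ => Nat.zero_le _) _ hx

lemma cnt_eq_zero {k : ℕ} (p : Nat.Partition k) {i : ℕ} (h : k < i) : cnt p i = 0 := by
  rw [cnt, Multiset.countP_eq_zero]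
  intro x hx hix
  exact absurd (le_trans hix (parts_le p hx)) (by omega)

lemma cnt_one {k : ℕ} (p : Nat.Partition k) : cnt p 1 = Multiset.card p.parts := by
  rw [cnt, Multiset.countP_eq_card]
  exact fun x hx => p.parts_pos hx

lemma card_parts_le {k : ℕ} (p : Nat.Partition k) : Multiset.card p.parts ≤ k := by
  have key : ∀ m : Multiset ℕ, (∀ x ∈ m, 0 < x) → Multiset.card m ≤ m.sum := by
    intro m
    induction m using Multiset.induction with
    | empty => simp
    | cons a s ih =>
      intro h
      simp only [Multiset.card_cons, Multiset.sum_cons]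
      have ha := h a (Multiset.mem_cons_self _ _)
      have := ih (fun x hx => h x (Multiset.mem_cons_of_mem hx))
      omega
  calc Multiset.card p.parts ≤ p.parts.sum := key _ (fun x hx => p.parts_pos hx)
    _ = k := p.parts_sum

lemma cnt_le {k : ℕ} (p : Nat.Partition k) (i : ℕ) : cnt p i ≤ k :=
  le_trans (Multiset.countP_le_card _ _) (card_parts_le p)

lemma count_le_cnt {k : ℕ} (p : Nat.Partition k) (j : ℕ) : p.parts.count j ≤ cnt p j := by
  rw [cnt_succ]; omega

lemma mem_parts_iff_cnt {k : ℕ} (p : Nat.Partition k) (j : ℕ) :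
    j ∈ p.parts ↔ cnt p (j + 1) < cnt p j := by
  rw [← Multiset.count_pos]
  have := cnt_succ p j
  omega

/-! ### A master counting lemma for antitone predicates -/

lemma lt_card_filter_iff {P : ℕ → Prop} [DecidablePred P] (k i : ℕ)
    (hP : ∀ a b, a ≤ b → P b → P a) :
    i < #(Finset.filter P (Finset.range k)) ↔ i < k ∧ P i := by
  constructor
  · intro h
    have hsub : Finset.filter P (Finset.range k) ⊆ Finset.range k := Finset.filter_subset _ _
    have hk : #(Finset.filter P (Finset.range k)) ≤ k := by
      simpa using Finset.card_le_card hsub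
    by_contra hcon
    rw [not_and_or] at hcon
    rcases hcon with hik | hPi
    · omega
    · -- filter ⊆ range i, so card ≤ i
      have : Finset.filter P (Finset.range k) ⊆ Finset.range i := by
        intro a ha
        rw [Finset.mem_filter] at ha
        rw [Finset.mem_range]
        by_contra hai
        exact hPi (hP i a (by omega) ha.2)
      have := Finset.card_le_card this
      simp only [Finset.card_range] at this
      omega
  · rintro ⟨hik, hPi⟩
    have : Finset.range (i + 1) ⊆ Finset.filter P (Finset.range k) := by
      intro a ha
      rw [Finset.mem_range] at ha
      rw [Finset.mem_filter, Finset.mem_range]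
      exact ⟨by omega, hP a i (by omega) hPi⟩
    have := Finset.card_le_card this
    simp only [Finset.card_range] at this
    omega

/-! ### The conjugate partition -/

/-- Gauss-type double counting: `∑_{i<k} #{x ∈ m | x ≥ i+1} = m.sum` when all `x ≤ k`. -/
lemma sum_min (m : Multiset ℕ) (k : ℕ) (h : ∀ x ∈ m, x ≤ k) :
    ∑ i ∈ Finset.range k, m.countP (fun x => i + 1 ≤ x) = m.sum := by
  induction m using Multiset.induction with
  | empty => simp
  | cons a s ih =>
    simp only [Multiset.countP_cons, Multiset.sum_cons, Finset.sum_add_distrib]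
    rw [ih (fun x hx => h x (Multiset.mem_cons_of_mem hx))]
    have ha : a ≤ k := h a (Multiset.mem_cons_self _ _)
    have h4 : (∑ i ∈ Finset.range k, if i + 1 ≤ a then 1 else 0) = a := by
      rw [Finset.sum_ite, Finset.sum_const, Finset.sum_const_zero]
      have : Finset.filter (fun i => i + 1 ≤ a) (Finset.range k) = Finset.range a := by
        ext i
        simp only [Finset.mem_filter, Finset.mem_range]
        omega
      rw [this, Finset.card_range]
      simp
    omega

/-- The conjugate of a partition of `k`. -/
def conj {k : ℕ} (p : Nat.Partition k) : Nat.Partition k where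
  parts := ((Multiset.range k).map (fun i => cnt p (i + 1))).filter (fun x => x ≠ 0)
  parts_pos := by
    intro i hi
    rw [Multiset.mem_filter] at hi
    omega
  parts_sum := by
    have h1 := Multiset.sum_filter_add_sum_filter_not
      (s := (Multiset.range k).map (fun i => cnt p (i + 1))) (fun x => x ≠ 0)
    have h2 : (((Multiset.range k).map (fun i => cnt p (i + 1))).filter
        (fun x => ¬x ≠ 0)).sum = 0 := by
      apply Multiset.sum_eq_zero
      intro x hx
      rw [Multiset.mem_filter] at hx
      omega
    have h3 : ((Multiset.range k).map (fun i => cnt p (i + 1))).sum = k := by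
      have := Finset.sum_eq_multiset_sum (Finset.range k) (fun i => cnt p (i + 1))
      rw [Finset.range_val] at this
      rw [← this]
      have := sum_min p.parts k (fun x hx => parts_le p hx)
      rw [p.parts_sum] at this
      exact this
    omega

lemma cnt_conj {k : ℕ} (p : Nat.Partition k) {j : ℕ} (hj : 1 ≤ j) :
    cnt (conj p) j = #(Finset.filter (fun i => j ≤ cnt p (i + 1)) (Finset.range k)) := by
  rw [cnt, conj]
  dsimp only
  rw [Multiset.countP_filter]
  have : Multiset.countP (fun a => j ≤ a ∧ a ≠ 0) ((Multiset.range k).map fun i => cnt p (i + 1))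
      = Multiset.countP (fun a => j ≤ a) ((Multiset.range k).map fun i => cnt p (i + 1)) := by
    apply Multiset.countP_congr rfl
    intro x _
    exact propext ⟨fun h => h.1, fun h => ⟨h, by omega⟩⟩
  rw [this, Multiset.countP_map]
  simp [Finset.card_def, Finset.filter_val, Finset.range_val]

lemma lt_cnt_conj_iff {k : ℕ} (p : Nat.Partition k) {j : ℕ} (hj : 1 ≤ j) (i : ℕ) :
    i < cnt (conj p) j ↔ i < k ∧ j ≤ cnt p (i + 1) := by
  rw [cnt_conj p hj]
  exact lt_card_filter_iff k i (fun a b hab hb => le_trans hb (cnt_anti p (by omega)))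

lemma cnt_conj_conj {k : ℕ} (p : Nat.Partition k) {j : ℕ} (hj : 1 ≤ j) :
    cnt (conj (conj p)) j = cnt p j := by
  by_cases hjk : j ≤ k
  · have key : ∀ i, i < cnt (conj (conj p)) j ↔ i < cnt p j := by
      intro i
      rw [lt_cnt_conj_iff (conj p) hj]
      constructor
      · rintro ⟨hik, hle⟩
        have h2 := (lt_cnt_conj_iff p (j := i + 1) (Nat.le_add_left 1 i) (j - 1)).mp (by omega)
        have : j - 1 + 1 = j := by omega
        rw [this] at h2
        omega
      · intro hi
        have hik : i < k := lt_of_lt_of_le hi (cnt_le p j)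
        refine ⟨hik, ?_⟩
        have h2 : j - 1 < cnt (conj p) (i + 1) := by
          rw [lt_cnt_conj_iff p (j := i + 1) (Nat.le_add_left 1 i)]
          have : j - 1 + 1 = j := by omega
          rw [this]
          omega
        omega
    have k1 := key (cnt (conj (conj p)) j)
    have k2 := key (cnt p j)
    omega
  · rw [cnt_eq_zero p (by omega), cnt_eq_zero (conj (conj p)) (by omega)]

lemma conj_conj {k : ℕ} (p : Nat.Partition k) : conj (conj p) = p := by
  apply Nat.Partition.ext
  rw [Multiset.ext]
  intro j
  rcases Nat.eq_zero_or_pos j with rfl | hj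
  · rw [Multiset.count_eq_zero_of_notMem (fun h => lt_irrefl 0 ((conj (conj p)).parts_pos h)),
      Multiset.count_eq_zero_of_notMem (fun h => lt_irrefl 0 (p.parts_pos h))]
  · have h1 := cnt_succ (conj (conj p)) j
    have h2 := cnt_succ p j
    have e1 := cnt_conj_conj p (j := j) (by omega)
    have e2 := cnt_conj_conj p (j := j + 1) (by omega)
    omega

lemma conj_mem_interval {k : ℕ} (p : Nat.Partition k) (hd : p.parts.Nodup) (j : ℕ) :
    j ∈ (conj p).parts ↔ 1 ≤ j ∧ j ≤ Multiset.card p.parts := by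
  rcases Nat.eq_zero_or_pos j with rfl | hj
  · simp only [Nat.le_zero]
    constructor
    · intro h; exact absurd ((conj p).parts_pos h) (lt_irrefl 0)
    · omega
  rw [mem_parts_iff_cnt]
  have hn : cnt p 1 = Multiset.card p.parts := cnt_one p
  by_cases hjn : j ≤ Multiset.card p.parts
  · -- show cnt (conj p) (j+1) < cnt (conj p) j
    have hk1 : 1 ≤ k := by
      have : 1 ≤ Multiset.card p.parts := by omega
      have := card_parts_le p
      omega
    have hcount : ∀ i, p.parts.count i ≤ 1 := Multiset.nodup_iff_count_le_one.mp hd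
    constructor
    · intro _; omega
    · intro _
      by_contra hcon
      push_neg at hcon
      set s := cnt (conj p) j with hs
      have hss : cnt (conj p) (j + 1) = s := le_antisymm (cnt_anti (conj p) (by omega)) hcon
      have h01 : cnt p (0 + 1) = Multiset.card p.parts := by
        rw [← hn]
      have hs1 : 1 ≤ s := by
        have := (lt_cnt_conj_iff p hj 0).mpr ⟨by omega, by omega⟩
        omega
      have hsk : s ≤ k := cnt_le (conj p) j
      have hA : j + 1 ≤ cnt p s := by
        have := (lt_cnt_conj_iff p (j := j + 1) (by omega) (s - 1)).mp (by omega)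
        have hs' : s - 1 + 1 = s := by omega
        rw [hs'] at this
        exact this.2
      have hB : cnt p (s + 1) < j := by
        by_cases hsk' : s < k
        · have := (lt_cnt_conj_iff p hj s).mp
          by_contra hcon2
          push_neg at hcon2
          have := this
          have hss2 : s < cnt (conj p) j := (lt_cnt_conj_iff p hj s).mpr ⟨hsk', hcon2⟩
          omega
        · have : s = k := by omega
          rw [this, cnt_eq_zero p (by omega)]
          omega
      have := cnt_succ p s
      have := hcount s
      omega
  · -- j > card: cnt (conj p) j = 0
    have hz : cnt (conj p) j = 0 := by
      by_contra hcon
      have : 0 < cnt (conj p) j := by omega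
      have h2 := (lt_cnt_conj_iff p hj 0).mp this
      have h01 : cnt p (0 + 1) = Multiset.card p.parts := by
        rw [← hn]
      omega
    have := cnt_anti (conj p) (i := j) (j := j + 1) (by omega)
    omega

lemma conj_of_interval {k : ℕ} (p : Nat.Partition k) (n : ℕ)
    (hI : ∀ j, j ∈ p.parts ↔ 1 ≤ j ∧ j ≤ n) :
    (conj p).parts.Nodup ∧ Multiset.card (conj p).parts = n := by
  constructor
  · rw [Multiset.nodup_iff_count_le_one]
    intro j
    rcases Nat.eq_zero_or_pos j with rfl | hj
    · rw [Multiset.count_eq_zero_of_notMem (fun h => lt_irrefl 0 ((conj p).parts_pos h))]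
      omega
    by_contra hcon
    push_neg at hcon
    have hcnt := cnt_succ (conj p) j
    set s' := cnt (conj p) (j + 1) with hs'
    have h1 : s' < cnt (conj p) j := by omega
    have h2 : s' + 1 < cnt (conj p) j := by omega
    have e1 := (lt_cnt_conj_iff p hj s').mp h1
    have e2 := (lt_cnt_conj_iff p hj (s' + 1)).mp h2
    have e3 : cnt p (s' + 1) ≤ j := by
      by_contra hcon2
      push_neg at hcon2
      have : s' < cnt (conj p) (j + 1) :=
        (lt_cnt_conj_iff p (j := j + 1) (by omega) s').mpr ⟨e1.1, hcon2⟩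
      omega
    have enorm : cnt p (s' + 1 + 1) = cnt p (s' + 2) := by norm_num
    have e4 : cnt p (s' + 2) ≤ cnt p (s' + 1) := cnt_anti p (by omega)
    have e5 : cnt p (s' + 2) = j := by
      have := e2.2
      omega
    have e6 : p.parts.count (s' + 1) = 0 := by
      have := cnt_succ p (s' + 1)
      omega
    have e7 : s' + 1 ∉ p.parts := by
      rw [← Multiset.count_pos] at *
      omega
    have e8 : ¬(1 ≤ s' + 1 ∧ s' + 1 ≤ n) := fun h => e7 ((hI (s' + 1)).mpr h)
    have e9 : n ≤ s' := by omega
    have e10 : 0 < cnt p (s' + 2) := by omega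
    rw [cnt, Multiset.countP_pos] at e10
    obtain ⟨x, hx, hx2⟩ := e10
    have := (hI x).mp hx
    omega
  · have hcard : Multiset.card (conj p).parts = cnt (conj p) 1 := (cnt_one (conj p)).symm
    rw [hcard]
    have key : ∀ i, i < cnt (conj p) 1 ↔ i < n := by
      intro i
      rw [lt_cnt_conj_iff p (le_refl 1)]
      constructor
      · rintro ⟨hik, hle⟩
        have : 0 < cnt p (i + 1) := by omega
        rw [cnt, Multiset.countP_pos] at this
        obtain ⟨x, hx, hx2⟩ := this
        have := (hI x).mp hx
        omega
      · intro hin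
        have hn1 : 1 ≤ n := by omega
        have hnp : n ∈ p.parts := (hI n).mpr ⟨hn1, le_refl n⟩
        have hnk : n ≤ k := parts_le p hnp
        refine ⟨by omega, ?_⟩
        have : 0 < cnt p (i + 1) := by
          rw [cnt, Multiset.countP_pos]
          exact ⟨n, hnp, by omega⟩
        omega
    have k1 := key (cnt (conj p) 1)
    have k2 := key n
    omega

/-! ### Counting distinct partitions by number of parts -/

lemma card_distincts_filter (k n : ℕ) :
    #((Nat.Partition.distincts k).filter (fun p => Multiset.card p.parts = n)) =
    #(Finset.univ.filter
      (fun p : Nat.Partition k => ∀ j, j ∈ p.parts ↔ 1 ≤ j ∧ j ≤ n)) := by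
  apply Finset.card_bij' (fun p _ => conj p) (fun p _ => conj p)
  · intro p hp
    simp only [Nat.Partition.distincts, Finset.mem_filter, Finset.mem_univ, true_and] at hp ⊢
    intro j
    rw [conj_mem_interval p hp.1 j, hp.2]
  · intro q hq
    simp only [Nat.Partition.distincts, Finset.mem_filter, Finset.mem_univ, true_and] at hq ⊢
    exact conj_of_interval q n hq
  · intro p _
    exact conj_conj p
  · intro q _
    exact conj_conj q

lemma distincts_card_eq_sum (k : ℕ) :
    #(Nat.Partition.distincts k) = ∑ n ∈ Finset.range (k + 1),
      #((Nat.Partition.distincts k).filter (fun p => Multiset.card p.parts = n)) :=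
  Finset.card_eq_sum_card_fiberwise (fun p _ =>
    Finset.mem_range.mpr (Nat.lt_succ_of_le (card_parts_le p)))

/-! ### The power series side -/

lemma tri (n : ℕ) : ∑ j ∈ Finset.range n, (j + 1) = n * (n + 1) / 2 := by
  induction n with
  | zero => simp
  | succ m ih =>
    rw [Finset.sum_range_succ, ih]
    have h1 : (m + 1) * (m + 1 + 1) = m * (m + 1) + 2 * (m + 1) := by ring
    have h2 : 2 ∣ m * (m + 1) := (Nat.even_mul_succ_self m).two_dvd
    omega

lemma X_pow_tri (n : ℕ) :
    (X : PowerSeries ℚ) ^ (n * (n + 1) / 2) = ∏ j ∈ Finset.range n, (X : PowerSeries ℚ) ^ (j + 1) := by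
  rw [Finset.prod_pow_eq_pow_sum, tri]

lemma inv_prod (n : ℕ) :
    (∏ j ∈ Finset.range n, (1 - (X : PowerSeries ℚ) ^ (j + 1)))⁻¹ =
      ∏ j ∈ Finset.range n, (1 - (X : PowerSeries ℚ) ^ (j + 1))⁻¹ := by
  induction n with
  | zero => simp
  | succ m ih =>
    rw [Finset.prod_range_succ, Finset.prod_range_succ, PowerSeries.mul_inv_rev, ih, mul_comm]

lemma X_mul_indicator (i : ℕ) :
    (X : PowerSeries ℚ) ^ (i + 1) * indicatorSeries ℚ {m | (i + 1) ∣ m} =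
      indicatorSeries ℚ ((· * (i + 1)) '' {m | 0 < m}) := by
  ext t
  rw [mul_comm, PowerSeries.coeff_mul_X_pow', coeff_indicator]
  have hiff : (i + 1 ≤ t ∧ (i + 1) ∣ (t - (i + 1))) ↔ t ∈ ((· * (i + 1)) '' {m | 0 < m}) := by
    simp only [Set.mem_image, Set.mem_setOf_eq]
    constructor
    · rintro ⟨h1, c, hc⟩
      refine ⟨c + 1, by omega, ?_⟩
      have hexp : (c + 1) * (i + 1) = (i + 1) * c + (i + 1) := by ring
      omega
    · rintro ⟨m, hm, rfl⟩
      obtain ⟨m', rfl⟩ : ∃ m', m = m' + 1 := ⟨m - 1, by omega⟩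
      have hexp : (m' + 1) * (i + 1) = (i + 1) * m' + (i + 1) := by ring
      exact ⟨by omega, ⟨m', by omega⟩⟩
  split_ifs with h1 h2
  · rw [coeff_indicator_pos _ _ (hiff.mp ⟨h1, h2⟩)]
  · rw [coeff_indicator_neg _ _ (fun hmem => h2 (hiff.mpr hmem).2)]
  · rw [coeff_indicator_neg _ _ (fun hmem => h1 (hiff.mpr hmem).1)]

lemma coeff_term (k n : ℕ) :
    (PowerSeries.coeff (R := ℚ) k) ((X : PowerSeries ℚ) ^ (n * (n + 1) / 2) *
        (∏ j ∈ Finset.range n, (1 - (X : PowerSeries ℚ) ^ (j + 1)))⁻¹) =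
      (#(Finset.univ.filter
        (fun p : Nat.Partition k => ∀ j, j ∈ p.parts ↔ 1 ≤ j ∧ j ≤ n)) : ℚ) := by
  rw [inv_prod, X_pow_tri, ← Finset.prod_mul_distrib]
  simp_rw [num_series', X_mul_indicator]
  set s : Finset ℕ := (Finset.range n).map ⟨Nat.succ, Nat.succ_injective⟩ with hs
  set c : ℕ → Set ℕ := fun i => if i ∈ s then {m | 0 < m} else Set.univ with hc
  have hmem_s : ∀ j, j ∈ s ↔ 1 ≤ j ∧ j ≤ n := by
    intro j
    simp only [hs, Finset.mem_map, Finset.mem_range, Function.Embedding.coeFn_mk]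
    constructor
    · rintro ⟨a, ha, rfl⟩; omega
    · rintro ⟨h1, h2⟩; exact ⟨j - 1, by omega, by omega⟩
  have hprod : (∏ j ∈ Finset.range n, indicatorSeries ℚ ((· * (j + 1)) '' {m | 0 < m})) =
      ∏ i ∈ s, indicatorSeries ℚ ((· * i) '' c i) := by
    rw [hs, Finset.prod_map]
    apply Finset.prod_congr rfl
    intro j hj
    have : (Nat.succ j) ∈ s := by
      rw [hmem_s]
      rw [Finset.mem_range] at hj
      omega
    simp only [Function.Embedding.coeFn_mk, hc, if_pos this, Nat.succ_eq_add_one]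
  rw [hprod]
  rw [← partialGF_prop ℚ k s (fun i hi => by rw [hmem_s] at hi; omega) c
    (fun i hi => by simp only [hc, if_neg hi]; trivial)]
  norm_cast
  apply congrArg
  apply Finset.filter_congr
  intro p _
  constructor
  · rintro ⟨h1, h2⟩ j
    constructor
    · intro hj
      rw [← hmem_s]
      exact h2 j hj
    · rintro hj
      rw [← hmem_s] at hj
      have := h1 j
      simp only [hc, hj, if_true, Set.mem_setOf_eq] at this
      exact Multiset.count_pos.mp this
  · intro hI
    constructor
    · intro j
      by_cases hj : j ∈ s
      · have hmem : j ∈ p.parts := (hI j).mpr ((hmem_s j).mp hj)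
        simp only [hc, hj, if_true, Set.mem_setOf_eq]
        exact Multiset.count_pos.mpr hmem
      · simp only [hc, hj, if_false, Set.mem_univ]
    · intro j hj
      rw [hmem_s]
      exact (hI j).mp hj

theorem gen_fun_distinct_parts' (k : ℕ) :
    ((Nat.Partition.distincts k).card : ℚ) =
      ∑ n ∈ Finset.range (k + 1),
        PowerSeries.coeff (R := ℚ) k ((PowerSeries.X : PowerSeries ℚ) ^ (n * (n + 1) / 2) *
          (∏ j ∈ Finset.range n, (1 - (PowerSeries.X : PowerSeries ℚ) ^ (j + 1)))⁻¹) := by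
  rw [Finset.sum_congr rfl (fun n _ => coeff_term k n)]
  rw [distincts_card_eq_sum k]
  push_cast
  exact Finset.sum_congr rfl (fun n _ => by rw [card_distincts_filter k n])

end

end GFDhelper


/-- Generating function for partitions into distinct parts:
`∑_{n≥0} d(n) qⁿ = ∑_{n≥0} q^{n(n+1)/2}/(q;q)_n` as formal power series.
Stated coefficient-wise: the coefficient of `q^k` in the right-hand side only receives
contributions from `n` with `n(n+1)/2 ≤ k`, so the sum may be truncated at `n = k`. -/
theorem gen_fun_distinct_parts (k : ℕ) :
    ((Nat.Partition.distincts k).card : ℚ) =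
      ∑ n ∈ Finset.range (k + 1),
        PowerSeries.coeff (R := ℚ) k ((PowerSeries.X : PowerSeries ℚ) ^ (n * (n + 1) / 2) *
          (∏ j ∈ Finset.range n, (1 - (PowerSeries.X : PowerSeries ℚ) ^ (j + 1)))⁻¹) :=
  GFDhelper.gen_fun_distinct_parts' k
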